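/- Suppose the primal problem min f₀(x) subject to f₁(x) ≤ 0 is strictly feasible, i.e., there exists x₀ with f₁(x₀) < 0. Then the dual function g(η) = inf_x (f₀(x) + η f₁(x)) attains its supremum over η ≥ 0 at some finite η* ∈ [0, ∞). -/
import Mathlib


open Set Filter Topology

/-- If the primal problem `min f₀(x) s.t. f₁(x) ≤ 0` is strictly
feasible (there is `x₀` with `f₁ x₀ < 0`) and `inf f₀ > -∞`, then the dual function
`g(η) = ⨅ x, (f₀ x + η f₁ x)` (valued in `EReal`) attains its supremum over `η ≥ 0`
at some finite `η* ∈ [0, ∞)`. -/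
theorem dual_optimum_attained
    {X : Type*} (f₀ f₁ : X → ℝ)
    (hbdd : BddBelow (Set.range f₀))
    (hstrict : ∃ x₀ : X, f₁ x₀ < 0)
    (g : ℝ → EReal)
    (hg : ∀ η, g η = ⨅ x : X, ((f₀ x + η * f₁ x : ℝ) : EReal)) :
    ∃ ηstar : ℝ, 0 ≤ ηstar ∧ ∀ η : ℝ, 0 ≤ η → g η ≤ g ηstar := by
  obtain ⟨x₀, hx₀⟩ := hstrict
  set m : ℝ := sInf (Set.range f₀) with hm
  have hmle : ∀ x, m ≤ f₀ x := fun x => csInf_le hbdd ⟨x, rfl⟩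
  -- upper bound on g
  have hgle : ∀ η, g η ≤ ((f₀ x₀ + η * f₁ x₀ : ℝ) : EReal) := fun η => by
    rw [hg]; exact iInf_le _ x₀
  -- g 0 ≥ m
  have hg0 : (m : EReal) ≤ g 0 := by
    rw [hg]
    refine le_iInf fun x => ?_
    simp only [zero_mul, add_zero]
    exact_mod_cast hmle x
  set M : ℝ := (f₀ x₀ - m) / (-f₁ x₀) with hM
  have hMnn : 0 ≤ M := div_nonneg (by linarith [hmle x₀]) (by linarith)
  -- the sup over the compact interval
  set S : EReal := sSup (g '' Icc 0 M) with hS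
  have h0mem : (0:ℝ) ∈ Icc 0 M := ⟨le_refl _, hMnn⟩
  have hg0S : g 0 ≤ S := le_sSup ⟨0, h0mem, rfl⟩
  -- every η ≥ 0 has g η ≤ S
  have hSub : ∀ η : ℝ, 0 ≤ η → g η ≤ S := by
    intro η hη
    by_cases hle : η ≤ M
    · exact le_sSup ⟨η, ⟨hη, hle⟩, rfl⟩
    · push_neg at hle
      refine (hgle η).trans (le_trans ?_ (hg0.trans hg0S))
      have : f₀ x₀ + η * f₁ x₀ < m := by
        have h1 : M * (-f₁ x₀) = f₀ x₀ - m := div_mul_cancel₀ _ (by linarith)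
        nlinarith
      exact_mod_cast this.le
  -- choose a sequence in the image tending to S
  obtain ⟨u, -, huS, humem⟩ := exists_seq_tendsto_sSup
    (⟨g 0, 0, h0mem, rfl⟩ : (g '' Icc 0 M).Nonempty) (OrderTop.bddAbove _)
  choose η hηmem hηval using humem
  obtain ⟨ηstar, hηstarmem, φ, hφ, hφtend⟩ :=
    (isCompact_Icc (a := (0:ℝ)) (b := M)).tendsto_subseq hηmem
  refine ⟨ηstar, hηstarmem.1, fun η' hη' => ?_⟩
  refine (hSub η' hη').trans ?_
  -- S ≤ g ηstar by upper semicontinuity (g is an inf of continuous affine maps)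
  rw [hg]
  refine le_iInf fun x => ?_
  have htend : Tendsto (fun n => ((f₀ x + η (φ n) * f₁ x : ℝ) : EReal)) atTop
      (𝓝 ((f₀ x + ηstar * f₁ x : ℝ) : EReal)) := by
    rw [EReal.tendsto_coe]
    exact (tendsto_const_nhds.add (hφtend.mul tendsto_const_nhds))
  have hle : ∀ n, u (φ n) ≤ ((f₀ x + η (φ n) * f₁ x : ℝ) : EReal) := fun n => by
    rw [← hηval (φ n), hg]; exact iInf_le _ x
  exact le_of_tendsto_of_tendsto' (huS.comp hφ.tendsto_atTop) htend hle
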